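/- Let 𝔥 be the Lie algebra on ℝ⁷ with structure equations de¹ = 0, de² = 0, de³ = −e³⁷, de⁴ = e⁴⁷, de⁵ = 2 e¹⁴ + e⁵⁷, de⁶ = −2 e²⁴ + e⁶⁷, de⁷ = 0, let φ = e¹²⁷ + e³⁴⁷ + e⁵⁶⁷ + e¹³⁵ − e¹⁴⁶ − e²³⁶ − e²⁴⁵ with induced metric g_φ = Σ_{i=1}^{7} (e^i)² and volume form dV_φ = e¹²³⁴⁵⁶⁷, and let τ = 2 e¹² + 2 e³⁴ − 4 e⁵⁶. Then |τ|²_{g_φ} = 24; the unique 3-form σ satisfying α ∧ (τ ∧ τ) = ⟨α, σ⟩_{g_φ} dV_φ for every 3-form α (i.e., σ = *_φ(τ ∧ τ)) equals −16(e¹²⁷ + e³⁴⁷) + 8 e⁵⁶⁷; and dτ ≠ (1/6)|τ|² φ + (1/6)σ. Hence the closed G₂-structure φ is not extremally Ricci pinched. -/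

import Mathlib

/-!
Common framework: unbundled exterior forms on ℝ⁷, wedge product, interior product,
Chevalley–Eilenberg differential of a Lie bracket, induced inner products on forms,
derived series, and the Lie algebras / G₂-structures from the paper
"Laplacian flow solitons on non-solvable Lie groups" (Fino–Raffero).
-/

open scoped BigOperators

namespace G2Solitons

/-- The underlying vector space ℝ⁷. -/
abbrev V7 : Type := Fin 7 → ℝ

/-- Unbundled `k`-forms: real-valued functions of `k` vectors of ℝ⁷. -/
abbrev Form (k : ℕ) : Type := (Fin k → V7) → ℝ

/-- Standard basis of ℝ⁷. -/
def stdB (i : Fin 7) : V7 := fun j => if j = i then 1 else 0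

/-- The basic `k`-form `e^{i₁} ∧ ⋯ ∧ e^{i_k}` (determinant convention, 0-indexed). -/
def eB {k : ℕ} (idx : Fin k → Fin 7) : Form k :=
  fun v => Matrix.det (Matrix.of fun a b : Fin k => v a (idx b))

/-- Wedge product of a `p`-form and a `q`-form (convention
`(α∧β)(v) = (p!q!)⁻¹ ∑_σ sgn σ · α(v∘σ|_{first p}) β(v∘σ|_{last q})`). -/
noncomputable def wedge {p q : ℕ} (α : Form p) (β : Form q) : Form (p + q) := fun v =>
  ((p.factorial * q.factorial : ℕ) : ℝ)⁻¹ *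
    ∑ σ : Equiv.Perm (Fin (p + q)),
      ((Equiv.Perm.sign σ : ℤ) : ℝ) *
        (α (fun i => v (σ (Fin.castAdd q i))) * β (fun j => v (σ (Fin.natAdd p j))))

/-- Interior product of a vector with a `(k+1)`-form. -/
def iprod {k : ℕ} (u : V7) (α : Form (k + 1)) : Form k := fun v => α (Fin.cons u v)

/-- Chevalley–Eilenberg differential of a `(k+1)`-form with respect to a bracket:
`(dα)(x₀,…,x_{k+1}) = ∑_{i<j} (-1)^{i+j} α([xᵢ,xⱼ], x₀,…,x̂ᵢ,…,x̂ⱼ,…,x_{k+1})`. -/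
def dCE {k : ℕ} (br : V7 → V7 → V7) (α : Form (k + 1)) : Form (k + 2) := fun v =>
  ∑ i : Fin (k + 2), ∑ j : Fin (k + 2),
    if (i : ℕ) < (j : ℕ) then
      (-1 : ℝ) ^ ((i : ℕ) + (j : ℕ)) *
        α (Fin.cons (br (v i) (v j)) fun l : Fin k =>
            if (l : ℕ) < (i : ℕ) then v ⟨(l : ℕ), by omega⟩
            else if (l : ℕ) + 1 < (j : ℕ) then v ⟨(l : ℕ) + 1, by omega⟩
            else v ⟨(l : ℕ) + 2, by omega⟩)
    else 0

/-- Inner product on `k`-forms induced by the diagonal metric `g = ∑ᵢ c i (e^i)²`,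
determined by declaring `{(c i₁ ⋯ c i_k)^{-1/2} e^{i₁⋯i_k} : i₁ < ⋯ < i_k}` orthonormal. -/
noncomputable def formInner (c : Fin 7 → ℝ) {k : ℕ} (α β : Form k) : ℝ :=
  ((k.factorial : ℕ) : ℝ)⁻¹ *
    ∑ f : Fin k → Fin 7,
      (∏ i, c (f i))⁻¹ * (α (fun i => stdB (f i)) * β (fun i => stdB (f i)))

/-- Natural action of an endomorphism `D` on a `k`-form:
`(D.α)(v₁,…,v_k) = ∑ᵢ α(v₁,…,D vᵢ,…,v_k)`. -/
def actD {k : ℕ} (D : V7 → V7) (α : Form k) : Form k := fun v =>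
  ∑ i : Fin k, α (Function.update v i (D (v i)))

/-- The Jacobi identity for a bilinear bracket. -/
def Jacobi (br : V7 → V7 → V7) : Prop :=
  ∀ x y z : V7, br (br x y) z + br (br y z) x + br (br z x) y = 0

/-- Unimodularity: `tr (ad x) = 0` for all `x`. -/
def Unimodular (br : V7 → V7 → V7) : Prop :=
  ∀ x : V7, ∑ i : Fin 7, br x (stdB i) i = 0

/-- Derivation property for a map `D`. -/
def IsDeriv (br : V7 → V7 → V7) (D : V7 → V7) : Prop :=
  ∀ x y : V7, D (br x y) = br (D x) y + br x (D y)

/-- Derived series of a bracket. -/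
def derSeries (br : V7 → V7 → V7) : ℕ → Submodule ℝ V7
  | 0 => ⊤
  | n + 1 => Submodule.span ℝ
      {z | ∃ x ∈ derSeries br n, ∃ y ∈ derSeries br n, z = br x y}

/-- Solvability: the derived series terminates at zero. -/
def Solvable (br : V7 → V7 → V7) : Prop := ∃ n, derSeries br n = ⊥

/-- Real cube root (the real root, also for negative arguments). -/
noncomputable def cbrt (x : ℝ) : ℝ :=
  if x < 0 then -((-x) ^ ((1 : ℝ) / 3)) else x ^ ((1 : ℝ) / 3)

/-- The standard volume form `e^{1234567}`. -/
def vol7 : Form 7 := eB ![0, 1, 2, 3, 4, 5, 6]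

end G2Solitons

namespace G2Solitons

noncomputable section

/-- The bracket of the Lie algebra `𝔥` with structure equations
`(0, 0, -e³⁷, e⁴⁷, 2 e¹⁴ + e⁵⁷, -2 e²⁴ + e⁶⁷, 0)`,
via the convention `dα(x,y) = -α([x,y])`. -/
def brH : V7 → V7 → V7 := fun x y =>
  ![0,
    0,
    x 2 * y 6 - x 6 * y 2,
    -(x 3 * y 6 - x 6 * y 3),
    -2 * (x 0 * y 3 - x 3 * y 0) - (x 4 * y 6 - x 6 * y 4),
    2 * (x 1 * y 3 - x 3 * y 1) - (x 5 * y 6 - x 6 * y 5),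
    0]

/-- `φ = e¹²⁷ + e³⁴⁷ + e⁵⁶⁷ + e¹³⁵ - e¹⁴⁶ - e²³⁶ - e²⁴⁵`. -/
def phiH : Form 3 := fun v =>
  eB ![0, 1, 6] v + eB ![2, 3, 6] v + eB ![4, 5, 6] v
    + eB ![0, 2, 4] v - eB ![0, 3, 5] v - eB ![1, 2, 5] v - eB ![1, 3, 4] v

/-- The standard Euclidean metric `g_φ = ∑_{i=1}^{7} (e^i)²`. -/
def gH (u v : V7) : ℝ := ∑ i : Fin 7, u i * v i

/-- `τ = 2 e¹² + 2 e³⁴ - 4 e⁵⁶`. -/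
def tauH : Form 2 := fun v =>
  2 * eB ![0, 1] v + 2 * eB ![2, 3] v - 4 * eB ![4, 5] v

/-- `D = diag(0, 0, -4, 4, 4, 4, 0)`. -/
def DH : V7 → V7 := fun x i => (![0, 0, -4, 4, 4, 4, 0] : Fin 7 → ℝ) i * x i

end

end G2Solitons

namespace G2Solitons


/-! ### Auxiliary lemmas -/

section Aux

open Equiv Equiv.Perm Finset in
theorem wedge_eB {p q : ℕ} (a : Fin p → Fin 7) (b : Fin q → Fin 7) :
    wedge (eB a) (eB b) = eB (Fin.append a b) := by
  classical
  funext v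
  set F : Equiv.Perm (Fin (p + q)) → ℝ := fun σ =>
    ((Equiv.Perm.sign σ : ℤ) : ℝ) *
      ((∏ i : Fin p, v (σ (Fin.castAdd q i)) (a i)) *
        ∏ j : Fin q, v (σ (Fin.natAdd p j)) (b j)) with hF
  have hRHS : eB (Fin.append a b) v = ∑ σ : Equiv.Perm (Fin (p + q)), F σ := by
    rw [eB, Matrix.det_apply]
    refine Finset.sum_congr rfl fun σ _ => ?_
    simp only [Matrix.of_apply, hF]
    rw [Fin.prod_univ_add (f := fun r => v (σ r) (Fin.append a b r))]
    simp [Units.smul_def, Fin.append_left, Fin.append_right]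
  have hdet : ∀ σ : Equiv.Perm (Fin (p + q)),
      eB a (fun i => v (σ (Fin.castAdd q i))) * eB b (fun j => v (σ (Fin.natAdd p j)))
        = ∑ π₁ : Equiv.Perm (Fin p), ∑ π₂ : Equiv.Perm (Fin q),
            (((Equiv.Perm.sign π₁ : ℤ) : ℝ) * ∏ i, v (σ (Fin.castAdd q (π₁ i))) (a i)) *
            (((Equiv.Perm.sign π₂ : ℤ) : ℝ) * ∏ j, v (σ (Fin.natAdd p (π₂ j))) (b j)) := by
    intro σ
    rw [eB, eB, Matrix.det_apply, Matrix.det_apply, Finset.sum_mul_sum]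
    simp [Units.smul_def, Matrix.of_apply]
  have key : ∀ (π₁ : Equiv.Perm (Fin p)) (π₂ : Equiv.Perm (Fin q)),
      (∑ σ : Equiv.Perm (Fin (p + q)), ((Equiv.Perm.sign σ : ℤ) : ℝ) *
        ((((Equiv.Perm.sign π₁ : ℤ) : ℝ) * ∏ i, v (σ (Fin.castAdd q (π₁ i))) (a i)) *
         (((Equiv.Perm.sign π₂ : ℤ) : ℝ) * ∏ j, v (σ (Fin.natAdd p (π₂ j))) (b j))))
      = ∑ σ, F σ := by
    intro π₁ π₂
    set P : Equiv.Perm (Fin (p + q)) :=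
      Equiv.permCongr finSumFinEquiv (Equiv.sumCongr π₁ π₂) with hP
    have hPc : ∀ i, P (Fin.castAdd q i) = Fin.castAdd q (π₁ i) := by
      intro i
      simp [hP, Equiv.permCongr_apply, finSumFinEquiv_symm_apply_castAdd,
        finSumFinEquiv_apply_left]
    have hPn : ∀ j, P (Fin.natAdd p j) = Fin.natAdd p (π₂ j) := by
      intro j
      simp [hP, Equiv.permCongr_apply, finSumFinEquiv_symm_apply_natAdd,
        finSumFinEquiv_apply_right]
    have hsP : ((Equiv.Perm.sign P : ℤ) : ℝ)
        = ((Equiv.Perm.sign π₁ : ℤ) : ℝ) * ((Equiv.Perm.sign π₂ : ℤ) : ℝ) := by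
      rw [hP, Equiv.Perm.sign_permCongr, Equiv.Perm.sign_sumCongr]
      push_cast
      ring
    rw [← Equiv.sum_comp (Equiv.mulRight P) F]
    refine Finset.sum_congr rfl fun σ _ => ?_
    have hFσ : F (Equiv.mulRight P σ) = F (σ * P) := rfl
    rw [hFσ, hF]
    simp only [Equiv.Perm.mul_apply, hPc, hPn, map_mul]
    push_cast
    rw [hsP]
    ring
  rw [wedge, hRHS]
  calc ((p.factorial * q.factorial : ℕ) : ℝ)⁻¹ *
      ∑ σ : Equiv.Perm (Fin (p + q)), ((Equiv.Perm.sign σ : ℤ) : ℝ) *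
        (eB a (fun i => v (σ (Fin.castAdd q i))) * eB b (fun j => v (σ (Fin.natAdd p j))))
      = ((p.factorial * q.factorial : ℕ) : ℝ)⁻¹ *
        ∑ π₁ : Equiv.Perm (Fin p), ∑ π₂ : Equiv.Perm (Fin q),
          ∑ σ : Equiv.Perm (Fin (p + q)), ((Equiv.Perm.sign σ : ℤ) : ℝ) *
            ((((Equiv.Perm.sign π₁ : ℤ) : ℝ) * ∏ i, v (σ (Fin.castAdd q (π₁ i))) (a i)) *
             (((Equiv.Perm.sign π₂ : ℤ) : ℝ) * ∏ j, v (σ (Fin.natAdd p (π₂ j))) (b j))) := by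
        congr 1
        calc (∑ σ : Equiv.Perm (Fin (p + q)), ((Equiv.Perm.sign σ : ℤ) : ℝ) *
              (eB a (fun i => v (σ (Fin.castAdd q i))) * eB b (fun j => v (σ (Fin.natAdd p j)))))
            = ∑ σ : Equiv.Perm (Fin (p + q)), ∑ π₁ : Equiv.Perm (Fin p),
                ∑ π₂ : Equiv.Perm (Fin q), ((Equiv.Perm.sign σ : ℤ) : ℝ) *
                  ((((Equiv.Perm.sign π₁ : ℤ) : ℝ) * ∏ i, v (σ (Fin.castAdd q (π₁ i))) (a i)) *
                   (((Equiv.Perm.sign π₂ : ℤ) : ℝ) * ∏ j, v (σ (Fin.natAdd p (π₂ j))) (b j))) := by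
              refine Finset.sum_congr rfl fun σ _ => ?_
              rw [hdet σ, Finset.mul_sum]
              exact Finset.sum_congr rfl fun π₁ _ => Finset.mul_sum _ _ _
          _ = ∑ π₁ : Equiv.Perm (Fin p), ∑ σ : Equiv.Perm (Fin (p + q)),
                ∑ π₂ : Equiv.Perm (Fin q), _ := Finset.sum_comm
          _ = _ := Finset.sum_congr rfl fun π₁ _ => Finset.sum_comm
    _ = ((p.factorial * q.factorial : ℕ) : ℝ)⁻¹ *
        ∑ _π₁ : Equiv.Perm (Fin p), ∑ _π₂ : Equiv.Perm (Fin q), ∑ σ, F σ := by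
        congr 1
        exact Finset.sum_congr rfl fun π₁ _ => Finset.sum_congr rfl fun π₂ _ => key π₁ π₂
    _ = ∑ σ, F σ := by
        simp only [Finset.sum_const, Finset.card_univ, Fintype.card_perm, Fintype.card_fin,
          smul_smul, nsmul_eq_mul]
        have hp : (p.factorial : ℝ) ≠ 0 := Nat.cast_ne_zero.mpr p.factorial_ne_zero
        have hq : (q.factorial : ℝ) ≠ 0 := Nat.cast_ne_zero.mpr q.factorial_ne_zero
        rw [Nat.cast_mul]
        field_simp

theorem formInner_eB_alt {k : ℕ} (idx : Fin k → Fin 7) (hinj : Function.Injective idx)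
    (σ : AlternatingMap ℝ V7 ℝ (Fin k)) :
    formInner (fun _ => 1) (eB idx) ⇑σ = σ (fun i => stdB (idx i)) := by
  classical
  rw [formInner]
  simp only [inv_one, Finset.prod_const_one, one_mul]
  have himg : ∀ f : Fin k → Fin 7,
      f ∉ Finset.image (fun π : Equiv.Perm (Fin k) => idx ∘ π) Finset.univ →
      eB idx (fun i => stdB (f i)) * σ (fun i => stdB (f i)) = 0 := by
    intro f hf
    by_cases hfi : Function.Injective f
    · have hcol : ∃ b : Fin k, ∀ i : Fin k, idx b ≠ f i := by
        by_contra hc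
        push_neg at hc
        have hsub : Finset.image idx Finset.univ ⊆ Finset.image f Finset.univ := by
          intro x hx
          simp only [Finset.mem_image] at hx ⊢
          obtain ⟨b, -, rfl⟩ := hx
          obtain ⟨i, hi⟩ := hc b
          exact ⟨i, Finset.mem_univ i, hi.symm⟩
        have heq : Finset.image idx Finset.univ = Finset.image f Finset.univ :=
          Finset.eq_of_subset_of_card_le hsub (by
            rw [Finset.card_image_of_injective _ hfi, Finset.card_image_of_injective _ hinj])
        have hmem : ∀ a : Fin k, ∃ b : Fin k, idx b = f a := by
          intro a
          have : f a ∈ Finset.image idx Finset.univ := by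
            rw [heq]; exact Finset.mem_image_of_mem f (Finset.mem_univ a)
          simpa [Finset.mem_image, eq_comm] using this
        choose g hg using hmem
        have hgi : Function.Injective g := by
          intro a b hab
          apply hfi
          rw [← hg a, ← hg b, hab]
        have hgb : Function.Bijective g := Finite.injective_iff_bijective.mp hgi
        refine hf (Finset.mem_image.mpr ⟨Equiv.ofBijective g hgb, Finset.mem_univ _, ?_⟩)
        funext a
        exact hg a
      obtain ⟨b, hb⟩ := hcol
      have hz : eB idx (fun i => stdB (f i)) = 0 := by
        apply Matrix.det_eq_zero_of_column_eq_zero b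
        intro i
        simp [Matrix.of_apply, stdB, hb i]
      rw [hz, zero_mul]
    · rw [Function.not_injective_iff] at hfi
      obtain ⟨a, b, hab, hne⟩ := hfi
      have hz : σ (fun i => stdB (f i)) = 0 :=
        σ.map_eq_zero_of_eq _ (i := a) (j := b) (by rw [hab]) hne
      rw [hz, mul_zero]
  have hinj2 : ∀ π ∈ Finset.univ, ∀ π' ∈ Finset.univ,
      (fun π : Equiv.Perm (Fin k) => idx ∘ π) π = (fun π : Equiv.Perm (Fin k) => idx ∘ π) π' →
      π = π' := by
    intro π _ π' _ h
    exact Equiv.ext fun i => hinj (congrFun h i)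
  have hsum : (∑ f : Fin k → Fin 7, eB idx (fun i => stdB (f i)) * σ (fun i => stdB (f i)))
      = ∑ π : Equiv.Perm (Fin k),
          eB idx (fun i => stdB (idx (π i))) * σ (fun i => stdB (idx (π i))) := by
    have e1 : (∑ f : Fin k → Fin 7, eB idx (fun i => stdB (f i)) * σ (fun i => stdB (f i)))
        = ∑ f ∈ Finset.image (fun π : Equiv.Perm (Fin k) => idx ∘ π) Finset.univ,
            eB idx (fun i => stdB (f i)) * σ (fun i => stdB (f i)) :=
      (Finset.sum_subset (Finset.subset_univ _) fun f _ hf => himg f hf).symm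
    have e2 := Finset.sum_image (f := fun f : Fin k → Fin 7 =>
      eB idx (fun i => stdB (f i)) * σ (fun i => stdB (f i))) hinj2
    exact e1.trans (e2.trans (Finset.sum_congr rfl fun π _ => rfl))
  have hval : ∀ π : Equiv.Perm (Fin k),
      eB idx (fun i => stdB (idx (π i))) * σ (fun i => stdB (idx (π i)))
        = σ (fun i => stdB (idx i)) := by
    intro π
    have hM : (Matrix.of fun a b : Fin k => stdB (idx (π a)) (idx b))
        = Equiv.Perm.permMatrix ℝ π := by
      ext a b
      simp only [Matrix.of_apply, stdB, Equiv.Perm.permMatrix, PEquiv.toMatrix_apply,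
        Equiv.toPEquiv_apply, Option.mem_def, Option.some.injEq, hinj.eq_iff]
      by_cases h : b = π a <;> simp [h, eq_comm]
    have hdet : eB idx (fun i => stdB (idx (π i))) = ((Equiv.Perm.sign π : ℤ) : ℝ) := by
      rw [eB, hM, Matrix.det_permutation]
    have hperm : σ (fun i => stdB (idx (π i)))
        = (Equiv.Perm.sign π) • σ (fun i => stdB (idx i)) := by
      have h := σ.map_perm (fun i => stdB (idx i)) π
      exact h
    rw [hdet, hperm]
    rcases Int.units_eq_one_or (Equiv.Perm.sign π) with h | h <;> simp [h]
  rw [hsum, Finset.sum_congr rfl fun π _ => hval π]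
  simp only [Finset.sum_const, Finset.card_univ, Fintype.card_perm, Fintype.card_fin,
    nsmul_eq_mul]
  rw [← mul_assoc, inv_mul_cancel₀ (Nat.cast_ne_zero.mpr k.factorial_ne_zero), one_mul]

theorem eB_dup {k : ℕ} (idx : Fin k → Fin 7) {a b : Fin k} (hab : a ≠ b)
    (h : idx a = idx b) : eB idx = fun _ => 0 := by
  funext v
  exact Matrix.det_zero_of_column_eq hab fun i => by simp [Matrix.of_apply, h]

theorem eB_perm {k : ℕ} (idx : Fin k → Fin 7) (π : Equiv.Perm (Fin k)) :
    eB (idx ∘ π) = fun v => ((Equiv.Perm.sign π : ℤ) : ℝ) * eB idx v := by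
  funext v
  have h := Matrix.det_permute' π (Matrix.of fun a b : Fin k => v a (idx b))
  simpa [eB, Matrix.submatrix, Units.smul_def] using h

theorem wedge_left3 {p q : ℕ} (α₁ α₂ α₃ : Form p) (β : Form q) (c₁ c₂ c₃ : ℝ) :
    wedge (fun v => c₁ * α₁ v + c₂ * α₂ v + c₃ * α₃ v) β
      = fun v => c₁ * wedge α₁ β v + c₂ * wedge α₂ β v + c₃ * wedge α₃ β v := by
  funext v
  simp only [wedge]
  have h : (∑ σ : Equiv.Perm (Fin (p + q)), ((Equiv.Perm.sign σ : ℤ) : ℝ) *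
        ((c₁ * α₁ (fun i => v (σ (Fin.castAdd q i))) + c₂ * α₂ (fun i => v (σ (Fin.castAdd q i)))
            + c₃ * α₃ (fun i => v (σ (Fin.castAdd q i)))) * β (fun j => v (σ (Fin.natAdd p j)))))
      = c₁ * (∑ σ : Equiv.Perm (Fin (p + q)), ((Equiv.Perm.sign σ : ℤ) : ℝ) *
            (α₁ (fun i => v (σ (Fin.castAdd q i))) * β (fun j => v (σ (Fin.natAdd p j)))))
        + c₂ * (∑ σ : Equiv.Perm (Fin (p + q)), ((Equiv.Perm.sign σ : ℤ) : ℝ) *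
            (α₂ (fun i => v (σ (Fin.castAdd q i))) * β (fun j => v (σ (Fin.natAdd p j)))))
        + c₃ * (∑ σ : Equiv.Perm (Fin (p + q)), ((Equiv.Perm.sign σ : ℤ) : ℝ) *
            (α₃ (fun i => v (σ (Fin.castAdd q i))) * β (fun j => v (σ (Fin.natAdd p j))))) := by
    rw [Finset.mul_sum, Finset.mul_sum, Finset.mul_sum, ← Finset.sum_add_distrib,
      ← Finset.sum_add_distrib]
    exact Finset.sum_congr rfl fun σ _ => by ring
  rw [h]
  ring

theorem wedge_right3 {p q : ℕ} (α : Form p) (β₁ β₂ β₃ : Form q) (c₁ c₂ c₃ : ℝ) :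
    wedge α (fun v => c₁ * β₁ v + c₂ * β₂ v + c₃ * β₃ v)
      = fun v => c₁ * wedge α β₁ v + c₂ * wedge α β₂ v + c₃ * wedge α β₃ v := by
  funext v
  simp only [wedge]
  have h : (∑ σ : Equiv.Perm (Fin (p + q)), ((Equiv.Perm.sign σ : ℤ) : ℝ) *
        (α (fun i => v (σ (Fin.castAdd q i))) *
          (c₁ * β₁ (fun j => v (σ (Fin.natAdd p j))) + c₂ * β₂ (fun j => v (σ (Fin.natAdd p j)))
            + c₃ * β₃ (fun j => v (σ (Fin.natAdd p j))))))
      = c₁ * (∑ σ : Equiv.Perm (Fin (p + q)), ((Equiv.Perm.sign σ : ℤ) : ℝ) *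
            (α (fun i => v (σ (Fin.castAdd q i))) * β₁ (fun j => v (σ (Fin.natAdd p j)))))
        + c₂ * (∑ σ : Equiv.Perm (Fin (p + q)), ((Equiv.Perm.sign σ : ℤ) : ℝ) *
            (α (fun i => v (σ (Fin.castAdd q i))) * β₂ (fun j => v (σ (Fin.natAdd p j)))))
        + c₃ * (∑ σ : Equiv.Perm (Fin (p + q)), ((Equiv.Perm.sign σ : ℤ) : ℝ) *
            (α (fun i => v (σ (Fin.castAdd q i))) * β₃ (fun j => v (σ (Fin.natAdd p j))))) := by
    rw [Finset.mul_sum, Finset.mul_sum, Finset.mul_sum, ← Finset.sum_add_distrib,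
      ← Finset.sum_add_distrib]
    exact Finset.sum_congr rfl fun σ _ => by ring
  rw [h]
  ring

theorem tauH_eq : tauH = fun v =>
    2 * eB ![0, 1] v + 2 * eB ![2, 3] v + (-4) * eB ![4, 5] v := by
  funext v
  simp only [tauH]
  ring

theorem tautau : wedge tauH tauH = fun v =>
    8 * eB ![0, 1, 2, 3] v + (-16) * eB ![0, 1, 4, 5] v + (-16) * eB ![2, 3, 4, 5] v := by
  have hperm4 : ∀ a b c d : Fin 7, eB ![c, d, a, b] = fun v => eB ![a, b, c, d] v := by
    intro a b c d
    have hidx : (![c, d, a, b] : Fin 4 → Fin 7)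
        = ![a, b, c, d] ∘ ((Equiv.swap 0 2) * (Equiv.swap 1 3) : Equiv.Perm (Fin 4)) := by
      funext i
      fin_cases i <;> rfl
    have hsgn : Equiv.Perm.sign ((Equiv.swap 0 2) * (Equiv.swap 1 3) : Equiv.Perm (Fin 4)) = 1 := by
      decide
    rw [hidx, eB_perm, hsgn]
    norm_num
  have happ : ∀ a b c d : Fin 7, Fin.append ![a, b] ![c, d] = ![a, b, c, d] := by
    intro a b c d
    funext i
    fin_cases i <;> rfl
  have hd1 : eB (![0, 1, 0, 1] : Fin 4 → Fin 7) = fun _ => (0 : ℝ) :=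
    eB_dup _ (a := 0) (b := 2) (by decide) rfl
  have hd2 : eB (![2, 3, 2, 3] : Fin 4 → Fin 7) = fun _ => (0 : ℝ) :=
    eB_dup _ (a := 0) (b := 2) (by decide) rfl
  have hd3 : eB (![4, 5, 4, 5] : Fin 4 → Fin 7) = fun _ => (0 : ℝ) :=
    eB_dup _ (a := 0) (b := 2) (by decide) rfl
  have hp1 := hperm4 0 1 2 3
  have hp2 := hperm4 0 1 4 5
  have hp3 := hperm4 2 3 4 5
  rw [tauH_eq, wedge_left3]
  funext v
  simp only [wedge_right3, wedge_eB, happ, hd1, hd2, hd3, hp1, hp2, hp3]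
  ring

theorem eB_std_perm (π : Equiv.Perm (Fin 7)) :
    eB (⇑π) stdB = ((Equiv.Perm.sign π : ℤ) : ℝ) := by
  have hM : (Matrix.of fun a b : Fin 7 => stdB a (π b))
      = Matrix.transpose (Equiv.Perm.permMatrix ℝ π) := by
    ext a b
    simp only [Matrix.of_apply, stdB, Matrix.transpose_apply, Equiv.Perm.permMatrix,
      PEquiv.toMatrix_apply, Equiv.toPEquiv_apply, Option.mem_def, Option.some.injEq]
  rw [eB, hM, Matrix.det_transpose, Matrix.det_permutation]

theorem eB_std_zero (L : Fin 7 → Fin 7) (h : ¬ Function.Injective L) :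
    eB L stdB = 0 := by
  rw [Function.not_injective_iff] at h
  obtain ⟨a, b, hL, hab⟩ := h
  exact congrFun (eB_dup L hab hL) stdB

theorem sum_fn_succ {n : ℕ} (F : (Fin (n + 1) → Fin 7) → ℝ) :
    ∑ f, F f = ∑ x : Fin 7, ∑ g : Fin n → Fin 7, F (Fin.cons x g) := by
  rw [← Equiv.sum_comp (Fin.consEquiv fun _ => Fin 7) F, Fintype.sum_prod_type]
  rfl

theorem sum_fn_zero (F : (Fin 0 → Fin 7) → ℝ) :
    ∑ f, F f = F (fun i => i.elim0) := by
  rw [show (Finset.univ : Finset (Fin 0 → Fin 7)) = {fun i => i.elim0} from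
    Finset.eq_singleton_iff_unique_mem.mpr
      ⟨Finset.mem_univ _, fun f _ => funext fun i => i.elim0⟩,
    Finset.sum_singleton]

theorem vol7_std : vol7 stdB = 1 := by
  have hπ : (![0, 1, 2, 3, 4, 5, 6] : Fin 7 → Fin 7) = ⇑(1 : Equiv.Perm (Fin 7)) := by
    funext i
    fin_cases i <;> rfl
  rw [vol7, hπ, eB_std_perm]
  simp

theorem tau_norm : formInner (fun _ => 1) tauH tauH = 24 := by
  rw [formInner]
  simp only [inv_one, Finset.prod_const_one, one_mul]
  rw [sum_fn_succ]
  simp only [sum_fn_succ, sum_fn_zero]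
  simp (config := { decide := true }) [tauH, eB, stdB, Matrix.det_fin_two, Fin.sum_univ_succ,
    Nat.factorial]
  norm_num

/-- `e^{i₁i₂i₃}` as a bundled alternating map. -/
noncomputable def altB {k : ℕ} (idx : Fin k → Fin 7) : AlternatingMap ℝ V7 ℝ (Fin k) :=
  (Matrix.detRowAlternating (R := ℝ) (n := Fin k)).compLinearMap
    (LinearMap.pi fun b => LinearMap.proj (idx b))

theorem altB_coe {k : ℕ} (idx : Fin k → Fin 7) : ⇑(altB idx) = eB idx := rfl

/-- The claimed value of `*_φ(τ∧τ)` as a bundled alternating map. -/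
noncomputable def sigma0 : AlternatingMap ℝ V7 ℝ (Fin 3) :=
  (-16 : ℝ) • altB ![0, 1, 6] + (-16 : ℝ) • altB ![2, 3, 6] + (8 : ℝ) • altB ![4, 5, 6]

theorem sigma0_apply (w : Fin 3 → V7) :
    sigma0 w = -16 * (eB ![0, 1, 6] w + eB ![2, 3, 6] w) + 8 * eB ![4, 5, 6] w := by
  have h : sigma0 w = (-16 : ℝ) * (altB ![0, 1, 6]) w + (-16 : ℝ) * (altB ![2, 3, 6]) w
      + (8 : ℝ) * (altB ![4, 5, 6]) w := by
    simp [sigma0]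
  rw [h, altB_coe, altB_coe, altB_coe]
  ring

theorem vec7_0 {α : Type*} (a b c d e f g : α) : ![a,b,c,d,e,f,g] 0 = a := rfl
theorem vec7_1 {α : Type*} (a b c d e f g : α) : ![a,b,c,d,e,f,g] 1 = b := rfl
theorem vec7_2 {α : Type*} (a b c d e f g : α) : ![a,b,c,d,e,f,g] 2 = c := rfl
theorem vec7_3 {α : Type*} (a b c d e f g : α) : ![a,b,c,d,e,f,g] 3 = d := rfl
theorem vec7_4 {α : Type*} (a b c d e f g : α) : ![a,b,c,d,e,f,g] 4 = e := rfl
theorem vec7_5 {α : Type*} (a b c d e f g : α) : ![a,b,c,d,e,f,g] 5 = f := rfl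
theorem vec7_6 {α : Type*} (a b c d e f g : α) : ![a,b,c,d,e,f,g] 6 = g := rfl

theorem finmk0 (h : 0 < 7) : (⟨0, h⟩ : Fin 7) = 0 := rfl
theorem finmk1 (h : 1 < 7) : (⟨1, h⟩ : Fin 7) = 1 := rfl
theorem finmk2 (h : 2 < 7) : (⟨2, h⟩ : Fin 7) = 2 := rfl
theorem finmk3 (h : 3 < 7) : (⟨3, h⟩ : Fin 7) = 3 := rfl
theorem finmk4 (h : 4 < 7) : (⟨4, h⟩ : Fin 7) = 4 := rfl
theorem finmk5 (h : 5 < 7) : (⟨5, h⟩ : Fin 7) = 5 := rfl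
theorem finmk6 (h : 6 < 7) : (⟨6, h⟩ : Fin 7) = 6 := rfl

theorem happ34 (a b c d e f g : Fin 7) :
    Fin.append ![a, b, c] ![d, e, f, g] = ![a, b, c, d, e, f, g] := by
  funext i
  fin_cases i <;> rfl

end Aux

set_option maxHeartbeats 12800000 in
/-- `|τ|² = 24`, `*_φ(τ ∧ τ) = -16(e¹²⁷ + e³⁴⁷) + 8e⁵⁶⁷`, and
`dτ ≠ (1/6)|τ|²φ + (1/6) *_φ(τ ∧ τ)`: `φ` is not extremally Ricci pinched. -/
theorem not_ERP_H :
    formInner (fun _ => 1) tauH tauH = 24 ∧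
    ∀ σ : AlternatingMap ℝ V7 ℝ (Fin 3),
      (∀ α : AlternatingMap ℝ V7 ℝ (Fin 3), ∀ w : Fin 7 → V7,
        wedge (⇑α) (wedge tauH tauH) w
          = formInner (fun _ => 1) (⇑α) (⇑σ) * vol7 w) →
      (∀ w : Fin 3 → V7,
        σ w = -16 * (eB ![0, 1, 6] w + eB ![2, 3, 6] w) + 8 * eB ![4, 5, 6] w) ∧
      ¬ (∀ w, dCE brH tauH w
          = 1 / 6 * formInner (fun _ => 1) tauH tauH * phiH w + 1 / 6 * σ w) := by
  have h456 : eB (![4, 5, 6, 0, 1, 2, 3] : Fin 7 → Fin 7) stdB = 1 := by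
    rw [show (![4, 5, 6, 0, 1, 2, 3] : Fin 7 → Fin 7)
        = ⇑(⟨![4, 5, 6, 0, 1, 2, 3], ![3, 4, 5, 6, 0, 1, 2], by decide, by decide⟩ :
            Equiv.Perm (Fin 7)) from rfl, eB_std_perm]
    norm_num [show Equiv.Perm.sign (⟨![4, 5, 6, 0, 1, 2, 3], ![3, 4, 5, 6, 0, 1, 2],
      by decide, by decide⟩ : Equiv.Perm (Fin 7)) = 1 from by decide]
  have h236 : eB (![2, 3, 6, 0, 1, 4, 5] : Fin 7 → Fin 7) stdB = 1 := by
    rw [show (![2, 3, 6, 0, 1, 4, 5] : Fin 7 → Fin 7)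
        = ⇑(⟨![2, 3, 6, 0, 1, 4, 5], ![3, 4, 0, 1, 5, 6, 2], by decide, by decide⟩ :
            Equiv.Perm (Fin 7)) from rfl, eB_std_perm]
    norm_num [show Equiv.Perm.sign (⟨![2, 3, 6, 0, 1, 4, 5], ![3, 4, 0, 1, 5, 6, 2],
      by decide, by decide⟩ : Equiv.Perm (Fin 7)) = 1 from by decide]
  have h016 : eB (![0, 1, 6, 2, 3, 4, 5] : Fin 7 → Fin 7) stdB = 1 := by
    rw [show (![0, 1, 6, 2, 3, 4, 5] : Fin 7 → Fin 7)
        = ⇑(⟨![0, 1, 6, 2, 3, 4, 5], ![0, 1, 3, 4, 5, 6, 2], by decide, by decide⟩ :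
            Equiv.Perm (Fin 7)) from rfl, eB_std_perm]
    norm_num [show Equiv.Perm.sign (⟨![0, 1, 6, 2, 3, 4, 5], ![0, 1, 3, 4, 5, 6, 2],
      by decide, by decide⟩ : Equiv.Perm (Fin 7)) = 1 from by decide]
  refine ⟨tau_norm, ?_⟩
  intro σ H
  have hval : ∀ idx : Fin 3 → Fin 7, Function.Injective idx →
      σ (fun i => stdB (idx i))
        = 8 * eB (Fin.append idx ![0, 1, 2, 3]) stdB
          + (-16) * eB (Fin.append idx ![0, 1, 4, 5]) stdB
          + (-16) * eB (Fin.append idx ![2, 3, 4, 5]) stdB := by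
    intro idx hinj
    have h := H (altB idx) stdB
    rw [altB_coe idx] at h
    rw [formInner_eB_alt idx hinj σ, vol7_std, mul_one] at h
    rw [tautau] at h
    simp only [wedge_right3, wedge_eB] at h
    exact h.symm
  have key : ∀ a b c : Fin 7, a < b → b < c →
      σ (fun i => stdB ((![a, b, c] : Fin 3 → Fin 7) i))
        = sigma0 (fun i => stdB ((![a, b, c] : Fin 3 → Fin 7) i)) := by
    intro a b c hab hbc
    have k012 : σ (fun i => stdB ((![0, 1, 2] : Fin 3 → Fin 7) i))
        = sigma0 (fun i => stdB ((![0, 1, 2] : Fin 3 → Fin 7) i)) := by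
      rw [hval ![0, 1, 2] (by decide), happ34, happ34, happ34, eB_std_zero ![0, 1, 2, 0, 1, 2, 3] (by decide), eB_std_zero ![0, 1, 2, 0, 1, 4, 5] (by decide), eB_std_zero ![0, 1, 2, 2, 3, 4, 5] (by decide), sigma0_apply]
      simp (config := { decide := true }) [eB, stdB, Matrix.det_fin_three]
      try norm_num
    have k013 : σ (fun i => stdB ((![0, 1, 3] : Fin 3 → Fin 7) i))
        = sigma0 (fun i => stdB ((![0, 1, 3] : Fin 3 → Fin 7) i)) := by
      rw [hval ![0, 1, 3] (by decide), happ34, happ34, happ34, eB_std_zero ![0, 1, 3, 0, 1, 2, 3] (by decide), eB_std_zero ![0, 1, 3, 0, 1, 4, 5] (by decide), eB_std_zero ![0, 1, 3, 2, 3, 4, 5] (by decide), sigma0_apply]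
      simp (config := { decide := true }) [eB, stdB, Matrix.det_fin_three]
      try norm_num
    have k014 : σ (fun i => stdB ((![0, 1, 4] : Fin 3 → Fin 7) i))
        = sigma0 (fun i => stdB ((![0, 1, 4] : Fin 3 → Fin 7) i)) := by
      rw [hval ![0, 1, 4] (by decide), happ34, happ34, happ34, eB_std_zero ![0, 1, 4, 0, 1, 2, 3] (by decide), eB_std_zero ![0, 1, 4, 0, 1, 4, 5] (by decide), eB_std_zero ![0, 1, 4, 2, 3, 4, 5] (by decide), sigma0_apply]
      simp (config := { decide := true }) [eB, stdB, Matrix.det_fin_three]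
      try norm_num
    have k015 : σ (fun i => stdB ((![0, 1, 5] : Fin 3 → Fin 7) i))
        = sigma0 (fun i => stdB ((![0, 1, 5] : Fin 3 → Fin 7) i)) := by
      rw [hval ![0, 1, 5] (by decide), happ34, happ34, happ34, eB_std_zero ![0, 1, 5, 0, 1, 2, 3] (by decide), eB_std_zero ![0, 1, 5, 0, 1, 4, 5] (by decide), eB_std_zero ![0, 1, 5, 2, 3, 4, 5] (by decide), sigma0_apply]
      simp (config := { decide := true }) [eB, stdB, Matrix.det_fin_three]
      try norm_num
    have k016 : σ (fun i => stdB ((![0, 1, 6] : Fin 3 → Fin 7) i))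
        = sigma0 (fun i => stdB ((![0, 1, 6] : Fin 3 → Fin 7) i)) := by
      rw [hval ![0, 1, 6] (by decide), happ34, happ34, happ34, eB_std_zero ![0, 1, 6, 0, 1, 2, 3] (by decide), eB_std_zero ![0, 1, 6, 0, 1, 4, 5] (by decide), h016, sigma0_apply]
      simp (config := { decide := true }) [eB, stdB, Matrix.det_fin_three]
      try norm_num
    have k023 : σ (fun i => stdB ((![0, 2, 3] : Fin 3 → Fin 7) i))
        = sigma0 (fun i => stdB ((![0, 2, 3] : Fin 3 → Fin 7) i)) := by
      rw [hval ![0, 2, 3] (by decide), happ34, happ34, happ34, eB_std_zero ![0, 2, 3, 0, 1, 2, 3] (by decide), eB_std_zero ![0, 2, 3, 0, 1, 4, 5] (by decide), eB_std_zero ![0, 2, 3, 2, 3, 4, 5] (by decide), sigma0_apply]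
      simp (config := { decide := true }) [eB, stdB, Matrix.det_fin_three]
      try norm_num
    have k024 : σ (fun i => stdB ((![0, 2, 4] : Fin 3 → Fin 7) i))
        = sigma0 (fun i => stdB ((![0, 2, 4] : Fin 3 → Fin 7) i)) := by
      rw [hval ![0, 2, 4] (by decide), happ34, happ34, happ34, eB_std_zero ![0, 2, 4, 0, 1, 2, 3] (by decide), eB_std_zero ![0, 2, 4, 0, 1, 4, 5] (by decide), eB_std_zero ![0, 2, 4, 2, 3, 4, 5] (by decide), sigma0_apply]
      simp (config := { decide := true }) [eB, stdB, Matrix.det_fin_three]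
      try norm_num
    have k025 : σ (fun i => stdB ((![0, 2, 5] : Fin 3 → Fin 7) i))
        = sigma0 (fun i => stdB ((![0, 2, 5] : Fin 3 → Fin 7) i)) := by
      rw [hval ![0, 2, 5] (by decide), happ34, happ34, happ34, eB_std_zero ![0, 2, 5, 0, 1, 2, 3] (by decide), eB_std_zero ![0, 2, 5, 0, 1, 4, 5] (by decide), eB_std_zero ![0, 2, 5, 2, 3, 4, 5] (by decide), sigma0_apply]
      simp (config := { decide := true }) [eB, stdB, Matrix.det_fin_three]
      try norm_num
    have k026 : σ (fun i => stdB ((![0, 2, 6] : Fin 3 → Fin 7) i))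
        = sigma0 (fun i => stdB ((![0, 2, 6] : Fin 3 → Fin 7) i)) := by
      rw [hval ![0, 2, 6] (by decide), happ34, happ34, happ34, eB_std_zero ![0, 2, 6, 0, 1, 2, 3] (by decide), eB_std_zero ![0, 2, 6, 0, 1, 4, 5] (by decide), eB_std_zero ![0, 2, 6, 2, 3, 4, 5] (by decide), sigma0_apply]
      simp (config := { decide := true }) [eB, stdB, Matrix.det_fin_three]
      try norm_num
    have k034 : σ (fun i => stdB ((![0, 3, 4] : Fin 3 → Fin 7) i))
        = sigma0 (fun i => stdB ((![0, 3, 4] : Fin 3 → Fin 7) i)) := by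
      rw [hval ![0, 3, 4] (by decide), happ34, happ34, happ34, eB_std_zero ![0, 3, 4, 0, 1, 2, 3] (by decide), eB_std_zero ![0, 3, 4, 0, 1, 4, 5] (by decide), eB_std_zero ![0, 3, 4, 2, 3, 4, 5] (by decide), sigma0_apply]
      simp (config := { decide := true }) [eB, stdB, Matrix.det_fin_three]
      try norm_num
    have k035 : σ (fun i => stdB ((![0, 3, 5] : Fin 3 → Fin 7) i))
        = sigma0 (fun i => stdB ((![0, 3, 5] : Fin 3 → Fin 7) i)) := by
      rw [hval ![0, 3, 5] (by decide), happ34, happ34, happ34, eB_std_zero ![0, 3, 5, 0, 1, 2, 3] (by decide), eB_std_zero ![0, 3, 5, 0, 1, 4, 5] (by decide), eB_std_zero ![0, 3, 5, 2, 3, 4, 5] (by decide), sigma0_apply]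
      simp (config := { decide := true }) [eB, stdB, Matrix.det_fin_three]
      try norm_num
    have k036 : σ (fun i => stdB ((![0, 3, 6] : Fin 3 → Fin 7) i))
        = sigma0 (fun i => stdB ((![0, 3, 6] : Fin 3 → Fin 7) i)) := by
      rw [hval ![0, 3, 6] (by decide), happ34, happ34, happ34, eB_std_zero ![0, 3, 6, 0, 1, 2, 3] (by decide), eB_std_zero ![0, 3, 6, 0, 1, 4, 5] (by decide), eB_std_zero ![0, 3, 6, 2, 3, 4, 5] (by decide), sigma0_apply]
      simp (config := { decide := true }) [eB, stdB, Matrix.det_fin_three]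
      try norm_num
    have k045 : σ (fun i => stdB ((![0, 4, 5] : Fin 3 → Fin 7) i))
        = sigma0 (fun i => stdB ((![0, 4, 5] : Fin 3 → Fin 7) i)) := by
      rw [hval ![0, 4, 5] (by decide), happ34, happ34, happ34, eB_std_zero ![0, 4, 5, 0, 1, 2, 3] (by decide), eB_std_zero ![0, 4, 5, 0, 1, 4, 5] (by decide), eB_std_zero ![0, 4, 5, 2, 3, 4, 5] (by decide), sigma0_apply]
      simp (config := { decide := true }) [eB, stdB, Matrix.det_fin_three]
      try norm_num
    have k046 : σ (fun i => stdB ((![0, 4, 6] : Fin 3 → Fin 7) i))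
        = sigma0 (fun i => stdB ((![0, 4, 6] : Fin 3 → Fin 7) i)) := by
      rw [hval ![0, 4, 6] (by decide), happ34, happ34, happ34, eB_std_zero ![0, 4, 6, 0, 1, 2, 3] (by decide), eB_std_zero ![0, 4, 6, 0, 1, 4, 5] (by decide), eB_std_zero ![0, 4, 6, 2, 3, 4, 5] (by decide), sigma0_apply]
      simp (config := { decide := true }) [eB, stdB, Matrix.det_fin_three]
      try norm_num
    have k056 : σ (fun i => stdB ((![0, 5, 6] : Fin 3 → Fin 7) i))
        = sigma0 (fun i => stdB ((![0, 5, 6] : Fin 3 → Fin 7) i)) := by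
      rw [hval ![0, 5, 6] (by decide), happ34, happ34, happ34, eB_std_zero ![0, 5, 6, 0, 1, 2, 3] (by decide), eB_std_zero ![0, 5, 6, 0, 1, 4, 5] (by decide), eB_std_zero ![0, 5, 6, 2, 3, 4, 5] (by decide), sigma0_apply]
      simp (config := { decide := true }) [eB, stdB, Matrix.det_fin_three]
      try norm_num
    have k123 : σ (fun i => stdB ((![1, 2, 3] : Fin 3 → Fin 7) i))
        = sigma0 (fun i => stdB ((![1, 2, 3] : Fin 3 → Fin 7) i)) := by
      rw [hval ![1, 2, 3] (by decide), happ34, happ34, happ34, eB_std_zero ![1, 2, 3, 0, 1, 2, 3] (by decide), eB_std_zero ![1, 2, 3, 0, 1, 4, 5] (by decide), eB_std_zero ![1, 2, 3, 2, 3, 4, 5] (by decide), sigma0_apply]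
      simp (config := { decide := true }) [eB, stdB, Matrix.det_fin_three]
      try norm_num
    have k124 : σ (fun i => stdB ((![1, 2, 4] : Fin 3 → Fin 7) i))
        = sigma0 (fun i => stdB ((![1, 2, 4] : Fin 3 → Fin 7) i)) := by
      rw [hval ![1, 2, 4] (by decide), happ34, happ34, happ34, eB_std_zero ![1, 2, 4, 0, 1, 2, 3] (by decide), eB_std_zero ![1, 2, 4, 0, 1, 4, 5] (by decide), eB_std_zero ![1, 2, 4, 2, 3, 4, 5] (by decide), sigma0_apply]
      simp (config := { decide := true }) [eB, stdB, Matrix.det_fin_three]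
      try norm_num
    have k125 : σ (fun i => stdB ((![1, 2, 5] : Fin 3 → Fin 7) i))
        = sigma0 (fun i => stdB ((![1, 2, 5] : Fin 3 → Fin 7) i)) := by
      rw [hval ![1, 2, 5] (by decide), happ34, happ34, happ34, eB_std_zero ![1, 2, 5, 0, 1, 2, 3] (by decide), eB_std_zero ![1, 2, 5, 0, 1, 4, 5] (by decide), eB_std_zero ![1, 2, 5, 2, 3, 4, 5] (by decide), sigma0_apply]
      simp (config := { decide := true }) [eB, stdB, Matrix.det_fin_three]
      try norm_num
    have k126 : σ (fun i => stdB ((![1, 2, 6] : Fin 3 → Fin 7) i))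
        = sigma0 (fun i => stdB ((![1, 2, 6] : Fin 3 → Fin 7) i)) := by
      rw [hval ![1, 2, 6] (by decide), happ34, happ34, happ34, eB_std_zero ![1, 2, 6, 0, 1, 2, 3] (by decide), eB_std_zero ![1, 2, 6, 0, 1, 4, 5] (by decide), eB_std_zero ![1, 2, 6, 2, 3, 4, 5] (by decide), sigma0_apply]
      simp (config := { decide := true }) [eB, stdB, Matrix.det_fin_three]
      try norm_num
    have k134 : σ (fun i => stdB ((![1, 3, 4] : Fin 3 → Fin 7) i))
        = sigma0 (fun i => stdB ((![1, 3, 4] : Fin 3 → Fin 7) i)) := by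
      rw [hval ![1, 3, 4] (by decide), happ34, happ34, happ34, eB_std_zero ![1, 3, 4, 0, 1, 2, 3] (by decide), eB_std_zero ![1, 3, 4, 0, 1, 4, 5] (by decide), eB_std_zero ![1, 3, 4, 2, 3, 4, 5] (by decide), sigma0_apply]
      simp (config := { decide := true }) [eB, stdB, Matrix.det_fin_three]
      try norm_num
    have k135 : σ (fun i => stdB ((![1, 3, 5] : Fin 3 → Fin 7) i))
        = sigma0 (fun i => stdB ((![1, 3, 5] : Fin 3 → Fin 7) i)) := by
      rw [hval ![1, 3, 5] (by decide), happ34, happ34, happ34, eB_std_zero ![1, 3, 5, 0, 1, 2, 3] (by decide), eB_std_zero ![1, 3, 5, 0, 1, 4, 5] (by decide), eB_std_zero ![1, 3, 5, 2, 3, 4, 5] (by decide), sigma0_apply]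
      simp (config := { decide := true }) [eB, stdB, Matrix.det_fin_three]
      try norm_num
    have k136 : σ (fun i => stdB ((![1, 3, 6] : Fin 3 → Fin 7) i))
        = sigma0 (fun i => stdB ((![1, 3, 6] : Fin 3 → Fin 7) i)) := by
      rw [hval ![1, 3, 6] (by decide), happ34, happ34, happ34, eB_std_zero ![1, 3, 6, 0, 1, 2, 3] (by decide), eB_std_zero ![1, 3, 6, 0, 1, 4, 5] (by decide), eB_std_zero ![1, 3, 6, 2, 3, 4, 5] (by decide), sigma0_apply]
      simp (config := { decide := true }) [eB, stdB, Matrix.det_fin_three]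
      try norm_num
    have k145 : σ (fun i => stdB ((![1, 4, 5] : Fin 3 → Fin 7) i))
        = sigma0 (fun i => stdB ((![1, 4, 5] : Fin 3 → Fin 7) i)) := by
      rw [hval ![1, 4, 5] (by decide), happ34, happ34, happ34, eB_std_zero ![1, 4, 5, 0, 1, 2, 3] (by decide), eB_std_zero ![1, 4, 5, 0, 1, 4, 5] (by decide), eB_std_zero ![1, 4, 5, 2, 3, 4, 5] (by decide), sigma0_apply]
      simp (config := { decide := true }) [eB, stdB, Matrix.det_fin_three]
      try norm_num
    have k146 : σ (fun i => stdB ((![1, 4, 6] : Fin 3 → Fin 7) i))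
        = sigma0 (fun i => stdB ((![1, 4, 6] : Fin 3 → Fin 7) i)) := by
      rw [hval ![1, 4, 6] (by decide), happ34, happ34, happ34, eB_std_zero ![1, 4, 6, 0, 1, 2, 3] (by decide), eB_std_zero ![1, 4, 6, 0, 1, 4, 5] (by decide), eB_std_zero ![1, 4, 6, 2, 3, 4, 5] (by decide), sigma0_apply]
      simp (config := { decide := true }) [eB, stdB, Matrix.det_fin_three]
      try norm_num
    have k156 : σ (fun i => stdB ((![1, 5, 6] : Fin 3 → Fin 7) i))
        = sigma0 (fun i => stdB ((![1, 5, 6] : Fin 3 → Fin 7) i)) := by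
      rw [hval ![1, 5, 6] (by decide), happ34, happ34, happ34, eB_std_zero ![1, 5, 6, 0, 1, 2, 3] (by decide), eB_std_zero ![1, 5, 6, 0, 1, 4, 5] (by decide), eB_std_zero ![1, 5, 6, 2, 3, 4, 5] (by decide), sigma0_apply]
      simp (config := { decide := true }) [eB, stdB, Matrix.det_fin_three]
      try norm_num
    have k234 : σ (fun i => stdB ((![2, 3, 4] : Fin 3 → Fin 7) i))
        = sigma0 (fun i => stdB ((![2, 3, 4] : Fin 3 → Fin 7) i)) := by
      rw [hval ![2, 3, 4] (by decide), happ34, happ34, happ34, eB_std_zero ![2, 3, 4, 0, 1, 2, 3] (by decide), eB_std_zero ![2, 3, 4, 0, 1, 4, 5] (by decide), eB_std_zero ![2, 3, 4, 2, 3, 4, 5] (by decide), sigma0_apply]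
      simp (config := { decide := true }) [eB, stdB, Matrix.det_fin_three]
      try norm_num
    have k235 : σ (fun i => stdB ((![2, 3, 5] : Fin 3 → Fin 7) i))
        = sigma0 (fun i => stdB ((![2, 3, 5] : Fin 3 → Fin 7) i)) := by
      rw [hval ![2, 3, 5] (by decide), happ34, happ34, happ34, eB_std_zero ![2, 3, 5, 0, 1, 2, 3] (by decide), eB_std_zero ![2, 3, 5, 0, 1, 4, 5] (by decide), eB_std_zero ![2, 3, 5, 2, 3, 4, 5] (by decide), sigma0_apply]
      simp (config := { decide := true }) [eB, stdB, Matrix.det_fin_three]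
      try norm_num
    have k236 : σ (fun i => stdB ((![2, 3, 6] : Fin 3 → Fin 7) i))
        = sigma0 (fun i => stdB ((![2, 3, 6] : Fin 3 → Fin 7) i)) := by
      rw [hval ![2, 3, 6] (by decide), happ34, happ34, happ34, eB_std_zero ![2, 3, 6, 0, 1, 2, 3] (by decide), h236, eB_std_zero ![2, 3, 6, 2, 3, 4, 5] (by decide), sigma0_apply]
      simp (config := { decide := true }) [eB, stdB, Matrix.det_fin_three]
      try norm_num
    have k245 : σ (fun i => stdB ((![2, 4, 5] : Fin 3 → Fin 7) i))
        = sigma0 (fun i => stdB ((![2, 4, 5] : Fin 3 → Fin 7) i)) := by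
      rw [hval ![2, 4, 5] (by decide), happ34, happ34, happ34, eB_std_zero ![2, 4, 5, 0, 1, 2, 3] (by decide), eB_std_zero ![2, 4, 5, 0, 1, 4, 5] (by decide), eB_std_zero ![2, 4, 5, 2, 3, 4, 5] (by decide), sigma0_apply]
      simp (config := { decide := true }) [eB, stdB, Matrix.det_fin_three]
      try norm_num
    have k246 : σ (fun i => stdB ((![2, 4, 6] : Fin 3 → Fin 7) i))
        = sigma0 (fun i => stdB ((![2, 4, 6] : Fin 3 → Fin 7) i)) := by
      rw [hval ![2, 4, 6] (by decide), happ34, happ34, happ34, eB_std_zero ![2, 4, 6, 0, 1, 2, 3] (by decide), eB_std_zero ![2, 4, 6, 0, 1, 4, 5] (by decide), eB_std_zero ![2, 4, 6, 2, 3, 4, 5] (by decide), sigma0_apply]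
      simp (config := { decide := true }) [eB, stdB, Matrix.det_fin_three]
      try norm_num
    have k256 : σ (fun i => stdB ((![2, 5, 6] : Fin 3 → Fin 7) i))
        = sigma0 (fun i => stdB ((![2, 5, 6] : Fin 3 → Fin 7) i)) := by
      rw [hval ![2, 5, 6] (by decide), happ34, happ34, happ34, eB_std_zero ![2, 5, 6, 0, 1, 2, 3] (by decide), eB_std_zero ![2, 5, 6, 0, 1, 4, 5] (by decide), eB_std_zero ![2, 5, 6, 2, 3, 4, 5] (by decide), sigma0_apply]
      simp (config := { decide := true }) [eB, stdB, Matrix.det_fin_three]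
      try norm_num
    have k345 : σ (fun i => stdB ((![3, 4, 5] : Fin 3 → Fin 7) i))
        = sigma0 (fun i => stdB ((![3, 4, 5] : Fin 3 → Fin 7) i)) := by
      rw [hval ![3, 4, 5] (by decide), happ34, happ34, happ34, eB_std_zero ![3, 4, 5, 0, 1, 2, 3] (by decide), eB_std_zero ![3, 4, 5, 0, 1, 4, 5] (by decide), eB_std_zero ![3, 4, 5, 2, 3, 4, 5] (by decide), sigma0_apply]
      simp (config := { decide := true }) [eB, stdB, Matrix.det_fin_three]
      try norm_num
    have k346 : σ (fun i => stdB ((![3, 4, 6] : Fin 3 → Fin 7) i))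
        = sigma0 (fun i => stdB ((![3, 4, 6] : Fin 3 → Fin 7) i)) := by
      rw [hval ![3, 4, 6] (by decide), happ34, happ34, happ34, eB_std_zero ![3, 4, 6, 0, 1, 2, 3] (by decide), eB_std_zero ![3, 4, 6, 0, 1, 4, 5] (by decide), eB_std_zero ![3, 4, 6, 2, 3, 4, 5] (by decide), sigma0_apply]
      simp (config := { decide := true }) [eB, stdB, Matrix.det_fin_three]
      try norm_num
    have k356 : σ (fun i => stdB ((![3, 5, 6] : Fin 3 → Fin 7) i))
        = sigma0 (fun i => stdB ((![3, 5, 6] : Fin 3 → Fin 7) i)) := by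
      rw [hval ![3, 5, 6] (by decide), happ34, happ34, happ34, eB_std_zero ![3, 5, 6, 0, 1, 2, 3] (by decide), eB_std_zero ![3, 5, 6, 0, 1, 4, 5] (by decide), eB_std_zero ![3, 5, 6, 2, 3, 4, 5] (by decide), sigma0_apply]
      simp (config := { decide := true }) [eB, stdB, Matrix.det_fin_three]
      try norm_num
    have k456 : σ (fun i => stdB ((![4, 5, 6] : Fin 3 → Fin 7) i))
        = sigma0 (fun i => stdB ((![4, 5, 6] : Fin 3 → Fin 7) i)) := by
      rw [hval ![4, 5, 6] (by decide), happ34, happ34, happ34, h456, eB_std_zero ![4, 5, 6, 0, 1, 4, 5] (by decide), eB_std_zero ![4, 5, 6, 2, 3, 4, 5] (by decide), sigma0_apply]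
      simp (config := { decide := true }) [eB, stdB, Matrix.det_fin_three]
      try norm_num
    fin_cases a <;> fin_cases b <;>
      first
        | exact absurd hab (by decide)
        | (fin_cases c <;>
            first
              | exact absurd hbc (by decide)
              | (simp only [finmk0, finmk1, finmk2, finmk3, finmk4, finmk5, finmk6]
                 first
                   | exact k012
                   | exact k013
                   | exact k014
                   | exact k015
                   | exact k016
                   | exact k023
                   | exact k024
                   | exact k025
                   | exact k026
                   | exact k034
                   | exact k035
                   | exact k036
                   | exact k045
                   | exact k046
                   | exact k056
                   | exact k123
                   | exact k124
                   | exact k125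
                   | exact k126
                   | exact k134
                   | exact k135
                   | exact k136
                   | exact k145
                   | exact k146
                   | exact k156
                   | exact k234
                   | exact k235
                   | exact k236
                   | exact k245
                   | exact k246
                   | exact k256
                   | exact k345
                   | exact k346
                   | exact k356
                   | exact k456))
  have hσeq : σ = sigma0 := by
    apply Module.Basis.ext_alternating (Pi.basisFun ℝ (Fin 7))
    intro v hv
    have hb : (fun i : Fin 3 => (Pi.basisFun ℝ (Fin 7)) (v i)) = fun i => stdB (v i) := by
      funext i j
      simp [Pi.basisFun_apply, Pi.single_apply, stdB]
    rw [hb]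
    set π := Tuple.sort v with hπ
    have hmono : Monotone (v ∘ π) := Tuple.monotone_sort v
    have hinj2 : Function.Injective (v ∘ π) := hv.comp (Equiv.injective π)
    have hsm : StrictMono (v ∘ π) := hmono.strictMono_of_injective hinj2
    have h01 : (v ∘ π) 0 < (v ∘ π) 1 := hsm (by decide)
    have h12 : (v ∘ π) 1 < (v ∘ π) 2 := hsm (by decide)
    have hkey := key ((v ∘ π) 0) ((v ∘ π) 1) ((v ∘ π) 2) h01 h12
    have hvec : (fun i => stdB ((![(v ∘ π) 0, (v ∘ π) 1, (v ∘ π) 2] : Fin 3 → Fin 7) i))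
        = fun i => stdB ((v ∘ π) i) := by
      funext i
      fin_cases i <;> rfl
    rw [hvec] at hkey
    have e1 := σ.map_perm (fun i => stdB (v i)) π
    have e2 := sigma0.map_perm (fun i => stdB (v i)) π
    have e3 : ((fun i => stdB (v i)) ∘ ⇑π) = fun i => stdB ((v ∘ ⇑π) i) := rfl
    rw [e3] at e1 e2
    rw [hkey] at e1
    have e4 := e1.symm.trans e2
    rcases Int.units_eq_one_or (Equiv.Perm.sign π) with hs | hs <;>
      rw [hs] at e4 <;> simpa using e4
  constructor
  · intro w
    rw [hσeq]
    exact sigma0_apply w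
  · intro hcon
    have h0 := hcon ![stdB 0, stdB 2, stdB 4]
    rw [tau_norm, hσeq, sigma0_apply] at h0
    have hd : dCE brH tauH ![stdB 0, stdB 2, stdB 4] = 0 := by
      simp (config := { decide := true }) [dCE, tauH, eB, brH, stdB, Fin.sum_univ_succ,
        Matrix.det_fin_two, vec7_0, vec7_1, vec7_2, vec7_3, vec7_4, vec7_5, vec7_6]
    have hp : phiH ![stdB 0, stdB 2, stdB 4] = 1 := by
      simp (config := { decide := true }) [phiH, eB, stdB, Matrix.det_fin_three]
    have he1 : eB ![0, 1, 6] (![stdB 0, stdB 2, stdB 4] : Fin 3 → V7) = 0 := by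
      simp (config := { decide := true }) [eB, stdB, Matrix.det_fin_three]
    have he2 : eB ![2, 3, 6] (![stdB 0, stdB 2, stdB 4] : Fin 3 → V7) = 0 := by
      simp (config := { decide := true }) [eB, stdB, Matrix.det_fin_three]
    have he3 : eB ![4, 5, 6] (![stdB 0, stdB 2, stdB 4] : Fin 3 → V7) = 0 := by
      simp (config := { decide := true }) [eB, stdB, Matrix.det_fin_three]
    rw [hd, hp, he1, he2, he3] at h0
    norm_num at h0


end G2Solitons
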